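/- Fix α ∈ [0,1]. If ‖αΔna + (1 − α)Δnb‖ ≠ 0, then the single-constraint problem P(α) has a unique minimizer, i.e., there is exactly one point (x1a, x1b, x2a, x2b) ∈ (ℝ^d)⁴ satisfying ‖α(x1a − x2a) + (1 − α)(x1b − x2b)‖ ≥ r + r′ at which F attains its minimum over the set of all points satisfying this constraint. -/

import Mathlib

set_option maxHeartbeats 1000000

open Set

/-- The proximal objective `F` of the two-agent collision problem. -/
noncomputable def collF (d : ℕ) (ρ1a ρ1b ρ2a ρ2b : ℝ)
    (n1a n1b n2a n2b : EuclideanSpace ℝ (Fin d))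
    (p : EuclideanSpace ℝ (Fin d) × EuclideanSpace ℝ (Fin d) ×
      EuclideanSpace ℝ (Fin d) × EuclideanSpace ℝ (Fin d)) : ℝ :=
  ρ1a / 2 * ‖p.1 - n1a‖ ^ 2 + ρ1b / 2 * ‖p.2.1 - n1b‖ ^ 2 +
    ρ2a / 2 * ‖p.2.2.1 - n2a‖ ^ 2 + ρ2b / 2 * ‖p.2.2.2 - n2b‖ ^ 2

/-- The no-collision constraint of the single-constraint problem `P(α)`,
for `p = (x1a, x1b, x2a, x2b)`. -/
def collFeas (d : ℕ) (r r' α : ℝ)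
    (p : EuclideanSpace ℝ (Fin d) × EuclideanSpace ℝ (Fin d) ×
      EuclideanSpace ℝ (Fin d) × EuclideanSpace ℝ (Fin d)) : Prop :=
  r + r' ≤ ‖α • (p.1 - p.2.2.1) + (1 - α) • (p.2.1 - p.2.2.2)‖

lemma cs2' (a b A B Sa Sb : ℝ) (hA : 0 ≤ A) (hB : 0 ≤ B) (hSa : 0 ≤ Sa) (hSb : 0 ≤ Sb)
    (ha : a^2 ≤ A*Sa) (hb : b^2 ≤ B*Sb) : (a+b)^2 ≤ (A+B)*(Sa+Sb) := by
  have hX : (0:ℝ) ≤ A*Sb + B*Sa := by positivity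
  have habs : (2*(a*b))^2 ≤ (A*Sb + B*Sa)^2 := by
    nlinarith [sq_nonneg (A*Sb - B*Sa), mul_le_mul ha hb (sq_nonneg b) (mul_nonneg hA hSa)]
  have h2ab : 2*(a*b) ≤ A*Sb + B*Sa := by
    calc 2*(a*b) ≤ |2*(a*b)| := le_abs_self _
      _ = Real.sqrt ((2*(a*b))^2) := (Real.sqrt_sq_eq_abs _).symm
      _ ≤ Real.sqrt ((A*Sb+B*Sa)^2) := Real.sqrt_le_sqrt habs
      _ = A*Sb+B*Sa := Real.sqrt_sq hX
  nlinarith [ha, hb, h2ab]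

lemma keybound {E : Type*} [NormedAddCommGroup E] [InnerProductSpace ℝ E]
    (c1 c2 c3 c4 ρ1 ρ2 ρ3 ρ4 : ℝ) (e1 e2 e3 e4 : E)
    (hc1 : 0 ≤ c1) (hc2 : 0 ≤ c2) (hc3 : 0 ≤ c3) (hc4 : 0 ≤ c4)
    (hρ1 : 0 < ρ1) (hρ2 : 0 < ρ2) (hρ3 : 0 < ρ3) (hρ4 : 0 < ρ4) :
    ‖c1•e1 + c2•e2 + c3•e3 + c4•e4‖^2 ≤
      (c1^2/ρ1 + c2^2/ρ2 + c3^2/ρ3 + c4^2/ρ4) *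
        (ρ1*‖e1‖^2 + ρ2*‖e2‖^2 + ρ3*‖e3‖^2 + ρ4*‖e4‖^2) := by
  have hn1 : ‖c1•e1‖ = c1*‖e1‖ := by simp [norm_smul, abs_of_nonneg hc1]
  have hn2 : ‖c2•e2‖ = c2*‖e2‖ := by simp [norm_smul, abs_of_nonneg hc2]
  have hn3 : ‖c3•e3‖ = c3*‖e3‖ := by simp [norm_smul, abs_of_nonneg hc3]
  have hn4 : ‖c4•e4‖ = c4*‖e4‖ := by simp [norm_smul, abs_of_nonneg hc4]
  have t1 := norm_add_le (c1•e1 + c2•e2 + c3•e3) (c4•e4)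
  have t2 := norm_add_le (c1•e1 + c2•e2) (c3•e3)
  have t3 := norm_add_le (c1•e1) (c2•e2)
  have htri : ‖c1•e1 + c2•e2 + c3•e3 + c4•e4‖ ≤
      c1*‖e1‖ + c2*‖e2‖ + (c3*‖e3‖ + c4*‖e4‖) := by
    linarith [t1, t2, t3, hn1, hn2, hn3, hn4]
  have hsq : ‖c1•e1 + c2•e2 + c3•e3 + c4•e4‖^2 ≤
      (c1*‖e1‖ + c2*‖e2‖ + (c3*‖e3‖ + c4*‖e4‖))^2 := by
    nlinarith [htri, norm_nonneg (c1•e1 + c2•e2 + c3•e3 + c4•e4)]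
  refine hsq.trans ?_
  have h12 : (c1*‖e1‖ + c2*‖e2‖)^2 ≤ (c1^2/ρ1 + c2^2/ρ2) * (ρ1*‖e1‖^2 + ρ2*‖e2‖^2) :=
    cs2' _ _ _ _ _ _ (by positivity) (by positivity) (by positivity) (by positivity)
      (le_of_eq (by field_simp)) (le_of_eq (by field_simp))
  have h34 : (c3*‖e3‖ + c4*‖e4‖)^2 ≤ (c3^2/ρ3 + c4^2/ρ4) * (ρ3*‖e3‖^2 + ρ4*‖e4‖^2) :=
    cs2' _ _ _ _ _ _ (by positivity) (by positivity) (by positivity) (by positivity)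
      (le_of_eq (by field_simp)) (le_of_eq (by field_simp))
  have hc := cs2' (c1*‖e1‖ + c2*‖e2‖) (c3*‖e3‖ + c4*‖e4‖)
    (c1^2/ρ1 + c2^2/ρ2) (c3^2/ρ3 + c4^2/ρ4)
    (ρ1*‖e1‖^2 + ρ2*‖e2‖^2) (ρ3*‖e3‖^2 + ρ4*‖e4‖^2)
    (by positivity) (by positivity) (by positivity) (by positivity) h12 h34
  calc (c1*‖e1‖ + c2*‖e2‖ + (c3*‖e3‖ + c4*‖e4‖))^2
      ≤ (c1^2/ρ1 + c2^2/ρ2 + (c3^2/ρ3 + c4^2/ρ4)) *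
        (ρ1*‖e1‖^2 + ρ2*‖e2‖^2 + (ρ3*‖e3‖^2 + ρ4*‖e4‖^2)) := hc
    _ = _ := by ring

lemma midsq {E : Type*} [NormedAddCommGroup E] [InnerProductSpace ℝ E] (x y n : E) :
    ‖(2:ℝ)⁻¹•(x+y) - n‖^2 = ‖x-n‖^2/2 + ‖y-n‖^2/2 - ‖x-y‖^2/4 := by
  have h : (2:ℝ)⁻¹•(x+y) - n = (2:ℝ)⁻¹ • ((x-n)+(y-n)) := by module
  have h2 : x - y = (x-n) - (y-n) := by abel
  rw [h, h2, norm_smul]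
  have hp := parallelogram_law_with_norm ℝ (x-n) (y-n)
  have h3 : (‖(2:ℝ)⁻¹‖ * ‖(x-n)+(y-n)‖)^2 = ‖(x-n)+(y-n)‖^2/4 := by
    rw [norm_inv]; simp; ring
  rw [h3]
  nlinarith [hp]

lemma normsq_nonpos_eq {E : Type*} [NormedAddCommGroup E] {x y : E}
    (h : ‖x - y‖^2 ≤ 0) : x = y := by
  have h1 : ‖x - y‖^2 = 0 := le_antisymm h (sq_nonneg _)
  have h2 : ‖x - y‖ = 0 := pow_eq_zero_iff two_ne_zero |>.mp h1
  exact sub_eq_zero.mp (norm_eq_zero.mp h2)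

lemma foursum {w1 w2 w3 w4 t1 t2 t3 t4 : ℝ} (hw1 : 0 < w1) (hw2 : 0 < w2)
    (hw3 : 0 < w3) (hw4 : 0 < w4) (ht1 : 0 ≤ t1) (ht2 : 0 ≤ t2) (ht3 : 0 ≤ t3)
    (ht4 : 0 ≤ t4) (h : w1*t1 + w2*t2 + w3*t3 + w4*t4 ≤ 0) :
    t1 ≤ 0 ∧ t2 ≤ 0 ∧ t3 ≤ 0 ∧ t4 ≤ 0 := by
  have p1 := mul_nonneg hw1.le ht1
  have p2 := mul_nonneg hw2.le ht2
  have p3 := mul_nonneg hw3.le ht3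
  have p4 := mul_nonneg hw4.le ht4
  exact ⟨by nlinarith, by nlinarith, by nlinarith, by nlinarith⟩

theorem stmt_3
    (d : ℕ) (hd : 1 ≤ d)
    (n1a n1b n2a n2b : EuclideanSpace ℝ (Fin d))
    (ρ1a ρ1b ρ2a ρ2b : ℝ)
    (hρ1a : 0 < ρ1a) (hρ1b : 0 < ρ1b) (hρ2a : 0 < ρ2a) (hρ2b : 0 < ρ2b)
    (r r' : ℝ) (hr : 0 < r) (hr' : 0 < r')
    (α : ℝ) (hα : α ∈ Icc (0 : ℝ) 1)
    (hne : ‖α • (n1a - n2a) + (1 - α) • (n1b - n2b)‖ ≠ 0) :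
    ∃! p : EuclideanSpace ℝ (Fin d) × EuclideanSpace ℝ (Fin d) ×
        EuclideanSpace ℝ (Fin d) × EuclideanSpace ℝ (Fin d),
      collFeas d r r' α p ∧
        ∀ q, collFeas d r r' α q →
          collF d ρ1a ρ1b ρ2a ρ2b n1a n1b n2a n2b p ≤
            collF d ρ1a ρ1b ρ2a ρ2b n1a n1b n2a n2b q := by
  obtain ⟨hα0, hα1⟩ := hα
  have hβ0 : (0:ℝ) ≤ 1 - α := by linarith
  obtain ⟨w, hw⟩ : ∃ x : EuclideanSpace ℝ (Fin d),
      x = α • (n1a - n2a) + (1 - α) • (n1b - n2b) := ⟨_, rfl⟩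
  rw [← hw] at hne
  obtain ⟨c, hcdef⟩ : ∃ x : ℝ, x = r + r' := ⟨_, rfl⟩
  have hc : 0 < c := by rw [hcdef]; positivity
  by_cases hcase : c ≤ ‖w‖
  · -- unconstrained minimizer is feasible
    have hfeas : collFeas d r r' α (n1a, n1b, n2a, n2b) := by
      show r + r' ≤ ‖α • (n1a - n2a) + (1 - α) • (n1b - n2b)‖
      rw [← hw, ← hcdef]; exact hcase
    refine ⟨(n1a, n1b, n2a, n2b), ⟨hfeas, ?_⟩, ?_⟩
    · intro q hq
      have h0 : collF d ρ1a ρ1b ρ2a ρ2b n1a n1b n2a n2b (n1a, n1b, n2a, n2b) = 0 := by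
        simp [collF]
      rw [h0]; unfold collF; positivity
    · rintro ⟨q1, q2, q3, q4⟩ ⟨hqf, hqmin⟩
      have hle := hqmin (n1a, n1b, n2a, n2b) hfeas
      have h0 : collF d ρ1a ρ1b ρ2a ρ2b n1a n1b n2a n2b (n1a, n1b, n2a, n2b) = 0 := by
        simp [collF]
      rw [h0] at hle
      simp only [collF] at hle
      obtain ⟨g1, g2, g3, g4⟩ := foursum (by positivity : (0:ℝ) < ρ1a/2)
        (by positivity : (0:ℝ) < ρ1b/2) (by positivity : (0:ℝ) < ρ2a/2)
        (by positivity : (0:ℝ) < ρ2b/2) (sq_nonneg (‖q1 - n1a‖)) (sq_nonneg (‖q2 - n1b‖))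
        (sq_nonneg (‖q3 - n2a‖)) (sq_nonneg (‖q4 - n2b‖)) hle
      have e1 : q1 = n1a := normsq_nonpos_eq g1
      have e2 : q2 = n1b := normsq_nonpos_eq g2
      have e3 : q3 = n2a := normsq_nonpos_eq g3
      have e4 : q4 = n2b := normsq_nonpos_eq g4
      rw [e1, e2, e3, e4]
  · -- constrained case
    have hs : 0 < ‖w‖ := lt_of_le_of_ne (norm_nonneg w) (Ne.symm hne)
    have hsc : ‖w‖ < c := lt_of_not_ge hcase
    obtain ⟨σ, hσdef⟩ : ∃ x : ℝ, x = α^2/ρ1a + (1-α)^2/ρ1b + α^2/ρ2a + (1-α)^2/ρ2b :=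
      ⟨_, rfl⟩
    have hσ : 0 < σ := by
      rw [hσdef]
      rcases eq_or_lt_of_le hα0 with h0 | h0
      · rw [← h0]; norm_num; positivity
      · have h1 : 0 < α^2/ρ1a := by positivity
        have h2 : (0:ℝ) ≤ (1-α)^2/ρ1b := by positivity
        have h3 : (0:ℝ) ≤ α^2/ρ2a := by positivity
        have h4 : (0:ℝ) ≤ (1-α)^2/ρ2b := by positivity
        linarith
    obtain ⟨lam, hlam⟩ : ∃ x : EuclideanSpace ℝ (Fin d), x = ((c - ‖w‖)/(σ*‖w‖)) • w :=
      ⟨_, rfl⟩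
    obtain ⟨pstar, hpstar⟩ : ∃ x : EuclideanSpace ℝ (Fin d) × EuclideanSpace ℝ (Fin d) ×
        EuclideanSpace ℝ (Fin d) × EuclideanSpace ℝ (Fin d),
        x = (n1a + (α/ρ1a) • lam, n1b + ((1-α)/ρ1b) • lam,
          n2a - (α/ρ2a) • lam, n2b - ((1-α)/ρ2b) • lam) := ⟨_, rfl⟩
    have hnlam : ‖lam‖ = (c - ‖w‖)/σ := by
      have hnn : (0:ℝ) ≤ (c-‖w‖)/(σ*‖w‖) :=
        div_nonneg (by linarith) (by positivity)
      rw [hlam, norm_smul, Real.norm_eq_abs, abs_of_nonneg hnn]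
      field_simp
    have hLp : α • (pstar.1 - pstar.2.2.1) + (1-α) • (pstar.2.1 - pstar.2.2.2)
        = (c/‖w‖) • w := by
      have hstep : α • (pstar.1 - pstar.2.2.1) + (1-α) • (pstar.2.1 - pstar.2.2.2)
          = (α • (n1a - n2a) + (1 - α) • (n1b - n2b)) +
            (α^2/ρ1a + (1-α)^2/ρ1b + α^2/ρ2a + (1-α)^2/ρ2b) • lam := by
        rw [hpstar]; module
      rw [hstep, ← hw, ← hσdef, hlam, smul_smul]
      have hcoef : σ * ((c - ‖w‖)/(σ*‖w‖)) = (c - ‖w‖)/‖w‖ := by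
        field_simp
      rw [hcoef]
      match_scalars
      field_simp
      ring
    have hnormcs : ‖(c/‖w‖) • w‖ = c := by
      rw [norm_smul, Real.norm_eq_abs, abs_of_pos (div_pos hc hs)]
      field_simp
    have hfeasp : collFeas d r r' α pstar := by
      show r + r' ≤ ‖α • (pstar.1 - pstar.2.2.1) + (1-α) • (pstar.2.1 - pstar.2.2.2)‖
      rw [hLp, hnormcs, hcdef]
    have hFp : collF d ρ1a ρ1b ρ2a ρ2b n1a n1b n2a n2b pstar = (c-‖w‖)^2/(2*σ) := by
      have ha1 : pstar.1 - n1a = (α/ρ1a) • lam := by rw [hpstar]; module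
      have ha2 : pstar.2.1 - n1b = ((1-α)/ρ1b) • lam := by rw [hpstar]; module
      have ha3 : pstar.2.2.1 - n2a = -((α/ρ2a) • lam) := by rw [hpstar]; module
      have ha4 : pstar.2.2.2 - n2b = -(((1-α)/ρ2b) • lam) := by rw [hpstar]; module
      rw [collF, ha1, ha2, ha3, ha4, norm_neg, norm_neg, norm_smul, norm_smul,
        norm_smul, norm_smul, Real.norm_eq_abs, Real.norm_eq_abs, Real.norm_eq_abs,
        Real.norm_eq_abs, abs_of_nonneg (div_nonneg hα0 hρ1a.le),
        abs_of_nonneg (div_nonneg hβ0 hρ1b.le),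
        abs_of_nonneg (div_nonneg hα0 hρ2a.le),
        abs_of_nonneg (div_nonneg hβ0 hρ2b.le), hnlam]
      have hcoefσ : ρ1a/2*(α/ρ1a)^2 + ρ1b/2*((1-α)/ρ1b)^2 + ρ2a/2*(α/ρ2a)^2
          + ρ2b/2*((1-α)/ρ2b)^2 = σ/2 := by
        rw [hσdef]; field_simp
      calc ρ1a / 2 * (α/ρ1a * ((c-‖w‖)/σ))^2 + ρ1b / 2 * ((1-α)/ρ1b * ((c-‖w‖)/σ))^2
            + ρ2a / 2 * (α/ρ2a * ((c-‖w‖)/σ))^2 + ρ2b / 2 * ((1-α)/ρ2b * ((c-‖w‖)/σ))^2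
          = (ρ1a/2*(α/ρ1a)^2 + ρ1b/2*((1-α)/ρ1b)^2 + ρ2a/2*(α/ρ2a)^2
            + ρ2b/2*((1-α)/ρ2b)^2) * ((c-‖w‖)/σ)^2 := by ring
        _ = σ/2 * ((c-‖w‖)/σ)^2 := by rw [hcoefσ]
        _ = (c-‖w‖)^2/(2*σ) := by field_simp
    -- lower bound for any feasible q
    have hlbkey : ∀ q : EuclideanSpace ℝ (Fin d) × EuclideanSpace ℝ (Fin d) ×
        EuclideanSpace ℝ (Fin d) × EuclideanSpace ℝ (Fin d),
        ‖(α • (q.1 - q.2.2.1) + (1-α) • (q.2.1 - q.2.2.2)) - w‖^2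
          ≤ σ * (2 * collF d ρ1a ρ1b ρ2a ρ2b n1a n1b n2a n2b q) := by
      intro q
      have hdiff : (α • (q.1 - q.2.2.1) + (1-α) • (q.2.1 - q.2.2.2)) - w
          = α•(q.1 - n1a) + (1-α)•(q.2.1 - n1b) + α•(-(q.2.2.1 - n2a))
            + (1-α)•(-(q.2.2.2 - n2b)) := by
        rw [hw]; module
      have hkb := keybound α (1-α) α (1-α) ρ1a ρ1b ρ2a ρ2b
        (q.1 - n1a) (q.2.1 - n1b) (-(q.2.2.1 - n2a)) (-(q.2.2.2 - n2b))
        hα0 hβ0 hα0 hβ0 hρ1a hρ1b hρ2a hρ2b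
      rw [← hdiff] at hkb
      simp only [norm_neg] at hkb
      rw [← hσdef] at hkb
      have h2F : ρ1a*‖q.1 - n1a‖^2 + ρ1b*‖q.2.1 - n1b‖^2 + ρ2a*‖q.2.2.1 - n2a‖^2
          + ρ2b*‖q.2.2.2 - n2b‖^2
          = 2 * collF d ρ1a ρ1b ρ2a ρ2b n1a n1b n2a n2b q := by
        rw [collF]; ring
      rw [h2F] at hkb
      exact hkb
    have htrkey : ∀ q : EuclideanSpace ℝ (Fin d) × EuclideanSpace ℝ (Fin d) ×
        EuclideanSpace ℝ (Fin d) × EuclideanSpace ℝ (Fin d), collFeas d r r' α q →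
        c - ‖w‖ ≤ ‖(α • (q.1 - q.2.2.1) + (1-α) • (q.2.1 - q.2.2.2)) - w‖ := by
      intro q hq
      have h1 := norm_sub_norm_le (α • (q.1 - q.2.2.1) + (1-α) • (q.2.1 - q.2.2.2)) w
      have h2 : r + r' ≤ ‖α • (q.1 - q.2.2.1) + (1-α) • (q.2.1 - q.2.2.2)‖ := hq
      linarith
    have hlb : ∀ q, collFeas d r r' α q →
        (c-‖w‖)^2/(2*σ) ≤ collF d ρ1a ρ1b ρ2a ρ2b n1a n1b n2a n2b q := by
      intro q hq
      have hkb := hlbkey q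
      have htr := htrkey q hq
      have h1 : (c-‖w‖)^2 ≤ ‖(α • (q.1 - q.2.2.1) + (1-α) • (q.2.1 - q.2.2.2)) - w‖^2 :=
        pow_le_pow_left₀ (by linarith) htr 2
      rw [div_le_iff₀ (by positivity)]
      nlinarith [hkb, h1]
    refine ⟨pstar, ⟨hfeasp, ?_⟩, ?_⟩
    · intro q hq
      rw [hFp]
      exact hlb q hq
    · -- uniqueness
      rintro q ⟨hqf, hqmin⟩
      have hFq : collF d ρ1a ρ1b ρ2a ρ2b n1a n1b n2a n2b q = (c-‖w‖)^2/(2*σ) := by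
        refine le_antisymm ?_ (hlb q hqf)
        have := hqmin pstar hfeasp
        rwa [hFp] at this
      have hkb := hlbkey q
      rw [hFq] at hkb
      have hkb2 : ‖(α • (q.1 - q.2.2.1) + (1-α) • (q.2.1 - q.2.2.2)) - w‖^2
          ≤ (c-‖w‖)^2 := by
        have hh : σ * (2 * ((c-‖w‖)^2/(2*σ))) = (c-‖w‖)^2 := by field_simp
        rw [hh] at hkb
        exact hkb
      obtain ⟨Lq, hLqdef⟩ : ∃ x : EuclideanSpace ℝ (Fin d),
        x = α • (q.1 - q.2.2.1) + (1-α) • (q.2.1 - q.2.2.2) := ⟨_, rfl⟩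
      rw [← hLqdef] at hkb2
      have htr : c - ‖w‖ ≤ ‖Lq - w‖ := by
        rw [hLqdef]; exact htrkey q hqf
      have hqf' : c ≤ ‖Lq‖ := by rw [hLqdef, hcdef]; exact hqf
      have hcs0 : (0:ℝ) ≤ c - ‖w‖ := by linarith
      have heq1 : ‖Lq - w‖ = c - ‖w‖ := by
        refine le_antisymm ?_ htr
        calc ‖Lq - w‖ = Real.sqrt (‖Lq - w‖^2) := (Real.sqrt_sq (norm_nonneg _)).symm
          _ ≤ Real.sqrt ((c-‖w‖)^2) := Real.sqrt_le_sqrt hkb2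
          _ = c - ‖w‖ := Real.sqrt_sq hcs0
      have heq2 : ‖Lq‖ = c := by
        refine le_antisymm ?_ hqf'
        have h2 : Lq - w + w = Lq := by abel
        have h1 := norm_add_le (Lq - w) w
        rw [h2] at h1
        linarith [heq1]
      have hinner : (inner ℝ Lq w : ℝ) = ‖Lq‖ * ‖w‖ := by
        have hexp := norm_sub_sq_real Lq w
        rw [heq1, heq2] at hexp
        rw [heq2]
        nlinarith [hexp]
      have hcol : ‖w‖ • Lq = c • w := by
        have h5 := inner_eq_norm_mul_iff_real.mp hinner
        rwa [heq2] at h5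
      have hLq : Lq = (c/‖w‖) • w := by
        have h1 : Lq = ‖w‖⁻¹ • (‖w‖ • Lq) := by
          rw [smul_smul, inv_mul_cancel₀ hs.ne', one_smul]
        rw [h1, hcol, smul_smul]
        congr 1
        field_simp
      -- midpoint argument
      obtain ⟨q1, q2, q3, q4⟩ := q
      simp only at hLqdef hFq hqf
      obtain ⟨m, hm⟩ : ∃ x : EuclideanSpace ℝ (Fin d) × EuclideanSpace ℝ (Fin d) ×
          EuclideanSpace ℝ (Fin d) × EuclideanSpace ℝ (Fin d),
          x = ((2:ℝ)⁻¹ • (q1 + pstar.1), (2:ℝ)⁻¹ • (q2 + pstar.2.1),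
            (2:ℝ)⁻¹ • (q3 + pstar.2.2.1), (2:ℝ)⁻¹ • (q4 + pstar.2.2.2)) := ⟨_, rfl⟩
      have hLm : α • (m.1 - m.2.2.1) + (1-α) • (m.2.1 - m.2.2.2) = (c/‖w‖) • w := by
        have hsplit : α • (m.1 - m.2.2.1) + (1-α) • (m.2.1 - m.2.2.2)
            = (2:ℝ)⁻¹ • ((α • (q1 - q3) + (1-α) • (q2 - q4)) +
              (α • (pstar.1 - pstar.2.2.1) + (1-α) • (pstar.2.1 - pstar.2.2.2))) := by
          rw [hm]; module
        rw [hsplit, ← hLqdef, hLq, hLp]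
        module
      have hfeasm : collFeas d r r' α m := by
        show r + r' ≤ ‖α • (m.1 - m.2.2.1) + (1-α) • (m.2.1 - m.2.2.2)‖
        rw [hLm, hnormcs, hcdef]
      have hFm := hlb m hfeasm
      have hm1 := midsq q1 pstar.1 n1a
      have hm2 := midsq q2 pstar.2.1 n1b
      have hm3 := midsq q3 pstar.2.2.1 n2a
      have hm4 := midsq q4 pstar.2.2.2 n2b
      have hFmval : collF d ρ1a ρ1b ρ2a ρ2b n1a n1b n2a n2b m
          = (collF d ρ1a ρ1b ρ2a ρ2b n1a n1b n2a n2b (q1,q2,q3,q4))/2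
            + (collF d ρ1a ρ1b ρ2a ρ2b n1a n1b n2a n2b pstar)/2
            - (ρ1a*‖q1 - pstar.1‖^2 + ρ1b*‖q2 - pstar.2.1‖^2
               + ρ2a*‖q3 - pstar.2.2.1‖^2 + ρ2b*‖q4 - pstar.2.2.2‖^2)/8 := by
        rw [hm]
        simp only [collF]
        rw [hm1, hm2, hm3, hm4]
        ring
      rw [hFq, hFp] at hFmval
      have hsum : ρ1a*‖q1 - pstar.1‖^2 + ρ1b*‖q2 - pstar.2.1‖^2
          + ρ2a*‖q3 - pstar.2.2.1‖^2 + ρ2b*‖q4 - pstar.2.2.2‖^2 ≤ 0 := by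
        rw [hFmval] at hFm
        linarith
      obtain ⟨g1, g2, g3, g4⟩ := foursum hρ1a hρ1b hρ2a hρ2b
        (sq_nonneg (‖q1 - pstar.1‖)) (sq_nonneg (‖q2 - pstar.2.1‖))
        (sq_nonneg (‖q3 - pstar.2.2.1‖)) (sq_nonneg (‖q4 - pstar.2.2.2‖)) hsum
      have e1 : q1 = pstar.1 := normsq_nonpos_eq g1
      have e2 : q2 = pstar.2.1 := normsq_nonpos_eq g2
      have e3 : q3 = pstar.2.2.1 := normsq_nonpos_eq g3
      have e4 : q4 = pstar.2.2.2 := normsq_nonpos_eq g4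
      rw [e1, e2, e3, e4]
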